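/- Consider a syntactically safe core-language algorithm satisfying Assumption (A), and let ψ be a unifier whose round predicates imply those of the global predicate. If bias(θ) →ψ f is a phase transition and either thr_u^1 ≤ thr_m^{1,k} or 1 − thr̄ ≤ θ ≤ thr̄, then f = solo or f = solo^a. -/

import Mathlib

open Classical

namespace HO

/-! ### Values

`none` is the undefined value `?`; defined values are natural numbers, where
`some 0` plays the role of `a` and `some 1` the role of `b` (so `a < b`). -/

abbrev Val := Option ℕ

def aVal : ℕ := 0
def bVal : ℕ := 1

/-! ### Operations -/

inductive Op where
  | min : Op
  | smor : Op

/-- Minimum of a multiset of defined values (`none` if the multiset is empty). -/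
noncomputable def msMin (S : Multiset ℕ) : Option ℕ :=
  if h : S.toFinset.Nonempty then some (S.toFinset.min' h) else none

/-- Smallest most frequent value of a multiset (`none` if the multiset is empty). -/
noncomputable def msSmor (S : Multiset ℕ) : Option ℕ :=
  if h : (S.toFinset.filter fun v => ∀ w ∈ S.toFinset, S.count w ≤ S.count v).Nonempty
  then some ((S.toFinset.filter fun v => ∀ w ∈ S.toFinset, S.count w ≤ S.count v).min' h)
  else none

noncomputable def Op.apply : Op → Multiset ℕ → Option ℕ
  | Op.min, S => msMin S
  | Op.smor, S => msSmor S

/-! ### Rounds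

A round consists of at most one `uni` instruction followed by a list of `mult`
instructions with non-increasing thresholds, all thresholds lying in `[0,1)`. -/

structure Round where
  uniThr : Option ℝ
  mults : List (ℝ × Op)
  wfU : ∀ t ∈ uniThr, 0 ≤ t ∧ t < 1
  wfM : ∀ q ∈ mults, 0 ≤ q.1 ∧ q.1 < 1
  sorted : (mults.map Prod.fst).Chain' (· ≥ ·)

def Round.hasUni (R : Round) : Prop := R.uniThr.isSome = true
def Round.hasMult (R : Round) : Prop := R.mults ≠ []

/-- `thr_u^i`: the threshold of the uni instruction, `-1` if absent. -/
noncomputable def Round.thrU (R : Round) : ℝ := R.uniThr.getD (-1)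

noncomputable def minThr : List ℝ → ℝ
  | [] => -1
  | [t] => t
  | t :: ts => min t (minThr ts)

/-- `thr_m^{i,k}`: the smallest threshold of a mult instruction, `-1` if absent. -/
noncomputable def Round.thrM (R : Round) : ℝ := minThr (R.mults.map Prod.fst)

/-- Result of the first applicable `mult` instruction. -/
noncomputable def firstMult (n : ℕ) (S : Multiset ℕ) : List (ℝ × Op) → Option ℕ
  | [] => none
  | (t, op) :: rest =>
      if 1 < S.toFinset.card ∧ t * n < (S.card : ℝ) then op.apply S
      else firstMult n S rest

/-- `update_i(H)`: the result of the first instruction of the round whose condition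
is satisfied by `H − {?}`, and `?` (i.e. `none`) if no condition applies. -/
noncomputable def Round.update (R : Round) (n : ℕ) (H : Multiset Val) : Option ℕ :=
  if ∃ t ∈ R.uniThr,
      (H.filterMap id).toFinset.card = 1 ∧ t * n < ((H.filterMap id).card : ℝ)
  then msMin (H.filterMap id)
  else firstMult n (H.filterMap id) R.mults

/-! ### Communication predicates for a round -/

/-- A conjunction of atomic communication predicates for one round: possibly
`φ_=` (field `eq`) and possibly `φ_thr` (field `thr`, with `0 ≤ thr < 1`). -/
structure RoundPred where
  eq : Bool
  thr : Option ℝ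
  wf : ∀ t ∈ thr, 0 ≤ t ∧ t < 1

/-- `thr_i(ψ)`: the threshold appearing in the predicate, `-1` if absent. -/
noncomputable def RoundPred.thrVal (φ : RoundPred) : ℝ := φ.thr.getD (-1)

def RoundPred.isEqualizer (φ : RoundPred) : Prop := φ.eq = true

/-- Satisfaction of a round predicate by a tuple of heard-of multisets. -/
def RoundPred.sat {α : Type} (φ : RoundPred) (n : ℕ) (Hs : Fin n → Multiset α) : Prop :=
  (φ.eq = true → ∀ p q, Hs p = Hs q) ∧
  ∀ t ∈ φ.thr, ∀ p, t * n < ((Hs p).card : ℝ)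

/-- Logical implication between round predicates. -/
def RoundPred.implies (φ φ' : RoundPred) : Prop :=
  ∀ (α : Type) (n : ℕ) (Hs : Fin n → Multiset α), φ.sat n Hs → φ'.sat n Hs

/-! ### Tuples of values -/

/-- The multiset of values of a tuple. -/
def msetOf {n : ℕ} (f : Fin n → Val) : Multiset Val := Finset.univ.val.map f

def soloB (n : ℕ) : Fin n → Val := fun _ => some bVal
def soloA (n : ℕ) : Fin n → Val := fun _ => some aVal
def soloQ (n : ℕ) : Fin n → Val := fun _ => none

/-- `bias(θ)`: a tuple over `{a,b}` with `θ·n` entries equal to `b`. -/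
def isBias {n : ℕ} (θ : ℝ) (f : Fin n → Val) : Prop :=
  (∀ p, f p = some aVal ∨ f p = some bVal) ∧
  ((Finset.univ.filter fun p => f p = some bVal).card : ℝ) = θ * n

/-- `spread = bias(1/2)`. -/
def isSpread {n : ℕ} (f : Fin n → Val) : Prop := isBias (1/2) f

/-- `bias^?(θ)`: a tuple over `{?,b}` with `θ·n` entries equal to `b`. -/
def isBiasQ {n : ℕ} (θ : ℝ) (f : Fin n → Val) : Prop :=
  (∀ p, f p = none ∨ f p = some bVal) ∧
  ((Finset.univ.filter fun p => f p = some bVal).card : ℝ) = θ * n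

/-- `bias_a^?(θ)`: a tuple over `{?,a}` with `θ·n` entries equal to `a`. -/
def isBiasQa {n : ℕ} (θ : ℝ) (f : Fin n → Val) : Prop :=
  (∀ p, f p = none ∨ f p = some aVal) ∧
  ((Finset.univ.filter fun p => f p = some aVal).card : ℝ) = θ * n

/-! ### Round transitions -/

/-- Round transition `f →[φ]_i f'`: every process receives a sub-multiset of the
multiset of sent values, the tuple of heard-of multisets jointly satisfies `φ`,
and every process updates its variable accordingly. -/
def roundTrans (R : Round) (φ : RoundPred) {n : ℕ} (f f' : Fin n → Val) : Prop :=
  ∃ Hs : Fin n → Multiset Val,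
    (∀ p, Hs p ≤ msetOf f) ∧ φ.sat n Hs ∧ ∀ p, f' p = R.update n (Hs p)

/-- `d ∈ fire_i(f,φ)`. -/
def fire (R : Round) (φ : RoundPred) {n : ℕ} (f : Fin n → Val) (d : Val) : Prop :=
  ∃ f' : Fin n → Val, roundTrans R φ f f' ∧ ∃ p, f' p = d

/-! ### Algorithms -/

/-- An algorithm of the core language: rounds `1,…,r` (`r ≥ 2`), with a designated
input-update round `ir` (`1 ≤ ir < r`). -/
structure Algo where
  r : ℕ
  rounds : ℕ → Round
  ir : ℕ
  two_le_r : 2 ≤ r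
  one_le_ir : 1 ≤ ir
  ir_lt_r : ir < r

noncomputable def Algo.thrU (A : Algo) (i : ℕ) : ℝ := (A.rounds i).thrU
noncomputable def Algo.thrM (A : Algo) (i : ℕ) : ℝ := (A.rounds i).thrM
def Algo.hasUni (A : Algo) (i : ℕ) : Prop := (A.rounds i).hasUni
def Algo.hasMult (A : Algo) (i : ℕ) : Prop := (A.rounds i).hasMult

/-- A phase predicate: a conjunction of atomic predicates for every round. -/
abbrev PhasePred := ℕ → RoundPred

/-- Phase transition `(f,d) →ψ (f',d')`. -/
def phaseTrans (A : Algo) (ψ : PhasePred) {n : ℕ} (f d f' d' : Fin n → Val) : Prop :=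
  ∃ g : ℕ → Fin n → Val,
    g 0 = f ∧
    (∀ i, 1 ≤ i → i ≤ A.r → roundTrans (A.rounds i) (ψ i) (g (i - 1)) (g i)) ∧
    (∀ p, f' p = if g A.ir p = none then f p else g A.ir p) ∧
    (∀ p, d' p = if d p = none then g A.r p else d p)

/-- A chain of round transitions for rounds `k,…,l`. -/
def roundChain (A : Algo) (ψ : PhasePred) (k l : ℕ) {n : ℕ} (f f' : Fin n → Val) : Prop :=
  ∃ g : ℕ → Fin n → Val,
    g (k - 1) = f ∧ g l = f' ∧
    ∀ i, k ≤ i → i ≤ l → roundTrans (A.rounds i) (ψ i) (g (i - 1)) (g i)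

/-! ### Syntactic notions -/

/-- Round `i` is preserving w.r.t. `ψ`. -/
def Algo.preserving (A : Algo) (ψ : PhasePred) (i : ℕ) : Prop :=
  ¬ A.hasUni i ∨ ¬ A.hasMult i ∨ (ψ i).thrVal < max (A.thrU i) (A.thrM i)

/-- Round `i` is solo-safe w.r.t. `ψ`. -/
def Algo.soloSafe (A : Algo) (ψ : PhasePred) (i : ℕ) : Prop :=
  0 ≤ A.thrU i ∧ A.thrU i ≤ (ψ i).thrVal

/-- The border threshold `thr̄ = max(1 − thr_u^1, 1 − thr_m^{1,k}/2)`. -/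
noncomputable def Algo.borderThr (A : Algo) : ℝ :=
  max (1 - A.thrU 1) (1 - A.thrM 1 / 2)

/-- `ψ` is a decider: all rounds are solo-safe w.r.t. `ψ`. -/
def Algo.decider (A : Algo) (ψ : PhasePred) : Prop :=
  ∀ i, 1 ≤ i → i ≤ A.r → A.soloSafe ψ i

/-- `ψ` is a unifier. -/
def Algo.unifier (A : Algo) (ψ : PhasePred) : Prop :=
  A.thrM 1 ≤ (ψ 1).thrVal ∧
  (A.thrU 1 ≤ (ψ 1).thrVal ∨ A.borderThr ≤ (ψ 1).thrVal) ∧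
  ∃ i, 1 ≤ i ∧ i ≤ A.ir ∧ (ψ i).isEqualizer ∧
    (∀ j, 2 ≤ j → j ≤ i → ¬ A.preserving ψ j) ∧
    (∀ j, i < j → j ≤ A.ir → A.soloSafe ψ j)

/-- The algorithm is syntactically safe. -/
def Algo.syntSafe (A : Algo) : Prop :=
  A.hasMult 1 ∧
  (∀ i, 1 ≤ i → i ≤ A.r → A.hasUni i) ∧
  (∀ q ∈ (A.rounds 1).mults, q.2 = Op.smor) ∧
  1 - A.thrU (A.ir + 1) ≤ A.thrM 1 / 2 ∧
  1 - A.thrU (A.ir + 1) ≤ A.thrU 1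

/-- Assumption (A) relative to the global predicate `gl`. -/
def Algo.assumptionA (A : Algo) (gl : PhasePred) : Prop :=
  ∀ i, 1 ≤ i → i ≤ A.r →
    (∀ j, 1 ≤ j → j < i → ¬ A.preserving gl j) →
    (A.hasUni i → (gl i).thrVal ≤ A.thrU i) ∧
    (A.hasMult i → (gl i).thrVal ≤ A.thrM i)

/-- Proviso (P): the global predicate has no equalizer and round `ir+1` has no
mult instruction. -/
def Algo.provisoP (A : Algo) (gl : PhasePred) : Prop :=
  (∀ i, 1 ≤ i → i ≤ A.r → ¬ (gl i).isEqualizer) ∧ ¬ A.hasMult (A.ir + 1)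

/-- Removing all mult instructions of a round. -/
def Round.dropMults (R : Round) : Round :=
  { uniThr := R.uniThr, mults := [], wfU := R.wfU,
    wfM := by simp, sorted := by first | exact List.IsChain.nil | exact List.Chain'.nil | simp [List.Chain'] }

/-- Removing all mult instructions of round `i` of an algorithm. -/
def Algo.dropMultsAt (A : Algo) (i : ℕ) : Algo :=
  { A with rounds := fun j => if j = i then (A.rounds j).dropMults else A.rounds j }

/-! ### Communication predicates, executions, consensus -/

/-- A communication predicate `(G ψ̄) ∧ F(ψ^1 ∧ F(ψ^2 ∧ … ∧ F ψ^k))`: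
a global phase predicate and sporadic phase predicates `ψ^1,…,ψ^k`. -/
structure CommPred where
  glob : PhasePred
  k : ℕ
  spor : ℕ → PhasePred

/-- Roundwise implication between phase predicates of an algorithm. -/
def predImplies (A : Algo) (ψ ψ' : PhasePred) : Prop :=
  ∀ i, 1 ≤ i → i ≤ A.r → (ψ i).implies (ψ' i)

/-- An execution of an algorithm respecting a communication predicate: an infinite
sequence of phase transitions under the global predicate, together with an
increasing sequence of times at which the sporadic predicates hold. -/
structure Exec (A : Algo) (C : CommPred) (n : ℕ) where
  inp : ℕ → Fin n → Val
  dec : ℕ → Fin n → Val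
  inp0 : ∀ p, inp 0 p ≠ none
  dec0 : ∀ p, dec 0 p = none
  step : ∀ s, phaseTrans A C.glob (inp s) (dec s) (inp (s + 1)) (dec (s + 1))
  sporTime : ℕ → ℕ
  mono : StrictMono sporTime
  sporStep : ∀ i, 1 ≤ i → i ≤ C.k →
    phaseTrans A (C.spor i) (inp (sporTime i)) (dec (sporTime i))
      (inp (sporTime i + 1)) (dec (sporTime i + 1))

/-- Agreement: in every reachable state, any two non-`?` decision values coincide. -/
def Agreement (A : Algo) (C : CommPred) : Prop :=
  ∀ n, 0 < n → ∀ E : Exec A C n, ∀ s p q v w,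
    E.dec s p = some v → E.dec s q = some w → v = w

/-- Termination: every execution reaches a state where all processes have decided. -/
def Termination (A : Algo) (C : CommPred) : Prop :=
  ∀ n, 0 < n → ∀ E : Exec A C n, ∃ s, ∀ p, E.dec s p ≠ none

/-- Solving consensus: agreement and termination. -/
def SolvesConsensus (A : Algo) (C : CommPred) : Prop :=
  Agreement A C ∧ Termination A C


/-! ### Auxiliary lemmas -/

lemma msMin_spec {S : Multiset ℕ} (h : S ≠ 0) : ∃ v ∈ S.toFinset, msMin S = some v := by
  have hne : S.toFinset.Nonempty := Multiset.toFinset_nonempty.mpr h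
  exact ⟨S.toFinset.min' hne, S.toFinset.min'_mem hne, by simp [msMin, hne]⟩

lemma msSmor_spec {S : Multiset ℕ} (h : S ≠ 0) : ∃ v ∈ S.toFinset, msSmor S = some v := by
  have hne : S.toFinset.Nonempty := Multiset.toFinset_nonempty.mpr h
  obtain ⟨b, hb, hmax⟩ := S.toFinset.exists_max_image (fun v => S.count v) hne
  have hfil : (S.toFinset.filter fun v => ∀ w ∈ S.toFinset, S.count w ≤ S.count v).Nonempty :=
    ⟨b, Finset.mem_filter.mpr ⟨hb, hmax⟩⟩
  refine ⟨_, ?_, by rw [msSmor, dif_pos hfil]⟩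
  exact Finset.filter_subset _ _ (Finset.min'_mem _ hfil)

lemma Op.apply_spec (op : Op) {S : Multiset ℕ} (h : S ≠ 0) :
    ∃ v ∈ S.toFinset, op.apply S = some v := by
  cases op
  · exact msMin_spec h
  · exact msSmor_spec h

lemma minThr_cons {t : ℝ} {L : List ℝ} (h : L ≠ []) :
    minThr (t :: L) = min t (minThr L) := by
  cases L with
  | nil => exact absurd rfl h
  | cons s L' => rfl

lemma minThr_nonneg {L : List ℝ} (h : L ≠ []) (h0 : ∀ t ∈ L, 0 ≤ t) : 0 ≤ minThr L := by
  induction L with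
  | nil => exact absurd rfl h
  | cons t L' ih =>
    cases L' with
    | nil => exact h0 t (by simp)
    | cons s L'' =>
      rw [minThr_cons (by simp)]
      exact le_min (h0 t (by simp)) (ih (by simp) (fun x hx => h0 x (List.mem_cons_of_mem _ hx)))

lemma firstMult_spec (n : ℕ) {S : Multiset ℕ} (hcard : 1 < S.toFinset.card) :
    ∀ L : List (ℝ × Op), L ≠ [] → minThr (L.map Prod.fst) * n < (S.card : ℝ) →
    ∃ v ∈ S.toFinset, firstMult n S L = some v := by
  have hS : S ≠ 0 := by
    intro h0
    simp [h0] at hcard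
  intro L
  induction L with
  | nil => intro h; exact absurd rfl h
  | cons hd tl ih =>
    intro _ hthr
    obtain ⟨t, op⟩ := hd
    by_cases hc : t * n < (S.card : ℝ)
    · obtain ⟨v, hv, hav⟩ := op.apply_spec hS
      exact ⟨v, hv, by simp [firstMult, hcard, hc, hav]⟩
    · have htl : tl ≠ [] := by
        intro h0
        subst h0
        simp [minThr] at hthr
        exact hc hthr
      have hmap : tl.map Prod.fst ≠ [] := by simp [htl]
      have hthr' : minThr (tl.map Prod.fst) * n < (S.card : ℝ) := by
        rw [List.map_cons, minThr_cons hmap] at hthr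
        rcases le_total t (minThr (tl.map Prod.fst)) with hle | hle
        · exact absurd (by rwa [min_eq_left hle] at hthr) hc
        · rwa [min_eq_right hle] at hthr
      obtain ⟨v, hv, hfv⟩ := ih htl hthr'
      exact ⟨v, hv, by simp [firstMult, hc, hfv]⟩

lemma thrVal_some {φ : RoundPred} (h : 0 ≤ φ.thrVal) : φ.thr = some φ.thrVal := by
  cases hφ : φ.thr with
  | none => simp [RoundPred.thrVal, hφ] at h; linarith
  | some t => simp [RoundPred.thrVal, hφ]

lemma update_of_singleton {R : Round} {n : ℕ} {H : Multiset Val} {v : ℕ} {t : ℝ}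
    (hu : R.uniThr = some t)
    (hfs : (H.filterMap id).toFinset = {v})
    (ht : t * n < ((H.filterMap id).card : ℝ)) :
    R.update n H = some v := by
  have hcond : ∃ t' ∈ R.uniThr,
      (H.filterMap id).toFinset.card = 1 ∧ t' * n < ((H.filterMap id).card : ℝ) := by
    exact ⟨t, by simp [hu], by simp [hfs], ht⟩
  have hne : (H.filterMap id).toFinset.Nonempty := by simp [hfs]
  rw [Round.update, if_pos hcond, msMin, dif_pos hne]
  have hall : ∀ y ∈ (H.filterMap id).toFinset, y = v := by simp [hfs]
  rw [hall _ ((H.filterMap id).toFinset.min'_mem hne)]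

lemma update_defined {R : Round} {n : ℕ} {H : Multiset Val}
    (hU : R.uniThr.isSome = true) (hM : R.mults ≠ [])
    (hne : H.filterMap id ≠ 0)
    (h1 : (H.filterMap id).toFinset.card = 1 → R.thrU * n < ((H.filterMap id).card : ℝ))
    (h2 : R.thrM * n < ((H.filterMap id).card : ℝ)) :
    ∃ v ∈ (H.filterMap id).toFinset, R.update n H = some v := by
  set Hf := H.filterMap id with hHf
  have hfne : Hf.toFinset.Nonempty := Multiset.toFinset_nonempty.mpr hne
  have hcpos : 1 ≤ Hf.toFinset.card := Finset.Nonempty.card_pos hfne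
  rcases eq_or_lt_of_le hcpos with hc1 | hc2
  · obtain ⟨v, hv⟩ := Finset.card_eq_one.mp hc1.symm
    obtain ⟨t, hti⟩ := Option.isSome_iff_exists.mp hU
    have htu : R.thrU = t := by simp [Round.thrU, hti]
    refine ⟨v, by simp [hv], ?_⟩
    exact update_of_singleton hti hv (by rw [← htu]; exact h1 hc1.symm)
  · have hcond : ¬ ∃ t' ∈ R.uniThr,
        Hf.toFinset.card = 1 ∧ t' * n < ((Hf).card : ℝ) := by
      rintro ⟨t', -, hc, -⟩
      omega
    obtain ⟨v, hv, hfv⟩ := firstMult_spec n hc2 R.mults hM h2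
    exact ⟨v, hv, by rw [Round.update, if_neg hcond]; exact hfv⟩

lemma filterMap_id_card {H : Multiset Val} (h : ∀ x ∈ H, x ≠ none) :
    (H.filterMap id).card = H.card := by
  induction H using Multiset.induction with
  | empty => simp
  | cons a s ih =>
    have ha : a ≠ none := h a (Multiset.mem_cons_self a s)
    obtain ⟨v, hv⟩ := Option.ne_none_iff_exists'.mp ha
    rw [hv, show Multiset.filterMap id (some v ::ₘ s) = v ::ₘ Multiset.filterMap id s from
      Multiset.filterMap_cons_some id _ _ rfl]
    rw [Multiset.card_cons, Multiset.card_cons, ih (fun x hx => h x (Multiset.mem_cons_of_mem hx))]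

lemma mem_filterMap_id {H : Multiset Val} {v : ℕ} :
    v ∈ H.filterMap id ↔ some v ∈ H := by
  rw [Multiset.mem_filterMap]
  constructor
  · rintro ⟨a, ha, rfl⟩; exact ha
  · intro h; exact ⟨some v, h, rfl⟩

lemma msetOf_mem {n : ℕ} {f : Fin n → Val} {x : Val} (hx : x ∈ msetOf f) : ∃ p, f p = x := by
  obtain ⟨p, -, hp⟩ := Multiset.mem_map.mp hx
  exact ⟨p, hp⟩

lemma msetOf_const {n : ℕ} (c : Val) : msetOf (fun _ : Fin n => c) = Multiset.replicate n c := by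
  rw [msetOf, Multiset.map_const']
  congr 1
  show (Finset.univ : Finset (Fin n)).card = n
  simp

lemma msetOf_count {n : ℕ} (f : Fin n → Val) (x : Val) :
    (msetOf f).count x = (Finset.univ.filter fun p => f p = x).card := by
  rw [msetOf, Multiset.count_map]
  show _ = Multiset.card (Finset.univ.filter fun p => f p = x).val
  rw [Finset.filter_val]
  congr 1
  exact Multiset.filter_congr (fun a _ => eq_comm)


lemma thrU_nonneg_of_some {R : Round} (h : R.uniThr.isSome = true) : 0 ≤ R.thrU := by
  obtain ⟨t, ht⟩ := Option.isSome_iff_exists.mp h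
  have hw := R.wfU t (by simp [ht])
  simp only [Round.thrU, ht, Option.getD_some]
  exact hw.1

lemma uniThr_some_of_nonneg {R : Round} (h : 0 ≤ R.thrU) : R.uniThr = some R.thrU := by
  cases hu : R.uniThr with
  | none => simp [Round.thrU, hu] at h; linarith
  | some t => simp [Round.thrU, hu]

lemma thrM_nonneg {R : Round} (h : R.mults ≠ []) : 0 ≤ R.thrM := by
  apply minThr_nonneg (by simp [h])
  intro t ht
  obtain ⟨q, hq, rfl⟩ := List.mem_map.mp ht
  exact (R.wfM q hq).1

lemma roundTrans_binary {R : Round} {φ : RoundPred} {n : ℕ} {h h' : Fin n → Val}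
    (htr : roundTrans R φ h h')
    (hvals : ∀ p, h p = some aVal ∨ h p = some bVal)
    (hU : R.uniThr.isSome = true) (hM : R.mults ≠ [])
    (hthr0 : 0 ≤ φ.thrVal)
    (hmth : R.thrM ≤ φ.thrVal)
    (hext : ∀ H : Multiset Val, H ≤ msetOf h → φ.thrVal * n < (H.card : ℝ) →
        (H.filterMap id).toFinset.card = 1 → R.thrU * n < ((H.filterMap id).card : ℝ)) :
    ∀ p, h' p = some aVal ∨ h' p = some bVal := by
  obtain ⟨Hs, hsub, hsat, hupd⟩ := htr
  intro p
  have hthr := hsat.2 φ.thrVal (by rw [Option.mem_def]; exact thrVal_some hthr0) p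
  have hdef : ∀ x ∈ Hs p, x ≠ none := by
    intro x hx
    obtain ⟨q, hq⟩ := msetOf_mem (Multiset.mem_of_le (hsub p) hx)
    rcases hvals q with hq' | hq' <;> simp [← hq, hq']
  have hcardeq : ((Hs p).filterMap id).card = (Hs p).card := filterMap_id_card hdef
  have hpos : (0:ℝ) < ((Hs p).card : ℝ) :=
    lt_of_le_of_lt (mul_nonneg hthr0 (Nat.cast_nonneg n)) hthr
  have hne : (Hs p).filterMap id ≠ 0 := by
    intro h0
    rw [h0] at hcardeq
    simp only [Multiset.card_zero] at hcardeq
    rw [← hcardeq] at hpos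
    simp at hpos
  have h2 : R.thrM * n < (((Hs p).filterMap id).card : ℝ) := by
    rw [hcardeq]
    calc R.thrM * n ≤ φ.thrVal * n := mul_le_mul_of_nonneg_right hmth (Nat.cast_nonneg n)
    _ < _ := hthr
  have h1 : ((Hs p).filterMap id).toFinset.card = 1 →
      R.thrU * n < (((Hs p).filterMap id).card : ℝ) :=
    hext (Hs p) (hsub p) hthr
  obtain ⟨v, hv, huv⟩ := update_defined hU hM hne h1 h2
  have hvmem : some v ∈ Hs p := mem_filterMap_id.mp (Multiset.mem_toFinset.mp hv)
  obtain ⟨q, hq⟩ := msetOf_mem (Multiset.mem_of_le (hsub p) hvmem)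
  rw [hupd p, huv]
  rcases hvals q with hq' | hq'
  · left; rw [hq'] at hq; rw [← hq]
  · right; rw [hq'] at hq; rw [← hq]

lemma roundTrans_solo {R : Round} {φ : RoundPred} {n : ℕ} {h h' : Fin n → Val} {v : ℕ}
    (htr : roundTrans R φ h h')
    (hvals : ∀ p, h p = some v)
    (h0 : 0 ≤ R.thrU) (hle : R.thrU ≤ φ.thrVal) :
    ∀ p, h' p = some v := by
  obtain ⟨Hs, hsub, hsat, hupd⟩ := htr
  have hthr0 : 0 ≤ φ.thrVal := le_trans h0 hle
  intro p
  have hthr := hsat.2 φ.thrVal (by rw [Option.mem_def]; exact thrVal_some hthr0) p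
  have hmem : ∀ x ∈ Hs p, x = some v := by
    intro x hx
    obtain ⟨q, hq⟩ := msetOf_mem (Multiset.mem_of_le (hsub p) hx)
    rw [← hq, hvals q]
  have hdef : ∀ x ∈ Hs p, x ≠ none := fun x hx => by rw [hmem x hx]; simp
  have hcardeq : ((Hs p).filterMap id).card = (Hs p).card := filterMap_id_card hdef
  have hposR : (0:ℝ) < ((Hs p).card : ℝ) :=
    lt_of_le_of_lt (mul_nonneg hthr0 (Nat.cast_nonneg n)) hthr
  have hpos : 0 < (Hs p).card := by exact_mod_cast hposR
  have hfs : ((Hs p).filterMap id).toFinset = {v} := by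
    ext w
    simp only [Multiset.mem_toFinset, mem_filterMap_id, Finset.mem_singleton]
    constructor
    · intro hw
      have := hmem _ hw
      exact Option.some_injective ℕ this
    · rintro rfl
      obtain ⟨x, hx⟩ := Multiset.card_pos_iff_exists_mem.mp hpos
      rw [← hmem x hx]; exact hx
  have htu : R.thrU * n < (((Hs p).filterMap id).card : ℝ) := by
    rw [hcardeq]
    calc R.thrU * n ≤ φ.thrVal * n := mul_le_mul_of_nonneg_right hle (Nat.cast_nonneg n)
    _ < _ := hthr
  rw [hupd p]
  exact update_of_singleton (uniThr_some_of_nonneg h0) hfs htu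

/-- Lemma 14.  Consider a syntactically safe core-language
algorithm satisfying Assumption (A), and a unifier `ψ` whose round predicates
imply those of the global predicate `gl`.  If `bias(θ) →ψ f'` is a phase
transition and either `thr_u^1 ≤ thr_m^{1,k}` or `1 − thr̄ ≤ θ ≤ thr̄`, then
`f' = solo` or `f' = solo^a`. -/
theorem unifier_phase (A : Algo) (gl ψ : PhasePred)
    (hs : A.syntSafe) (hA : A.assumptionA gl)
    (himp : predImplies A ψ gl)
    (hu : A.unifier ψ) :
    ∀ (θ : ℝ) (n : ℕ), 0 < n → ∀ f d f' d' : Fin n → Val,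
      isBias θ f →
      phaseTrans A ψ f d f' d' →
      (A.thrU 1 ≤ A.thrM 1 ∨ (1 - A.borderThr ≤ θ ∧ θ ≤ A.borderThr)) →
      f' = soloB n ∨ f' = soloA n := by
  intro θ n hn f d f' d' hbias hpt hcase
  obtain ⟨hMult1, hUall, _hsmor, _hsafe1, _hsafe2⟩ := hs
  obtain ⟨hum, huOr, e, he1, heir, heq, hnonpres, hss⟩ := hu
  obtain ⟨g, hg0, hround, hf', _hd'⟩ := hpt
  have hr1 : 1 ≤ A.r := le_trans (by norm_num) A.two_le_r
  have hirr : A.ir < A.r := A.ir_lt_r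
  have her : e ≤ A.r := le_trans heir (le_of_lt hirr)
  have hM1 : (A.rounds 1).mults ≠ [] := hMult1
  have hU1 : (A.rounds 1).uniThr.isSome = true := hUall 1 le_rfl hr1
  have hthrM1 : 0 ≤ A.thrM 1 := thrM_nonneg hM1
  have ht1 : 0 ≤ (ψ 1).thrVal := le_trans hthrM1 hum
  -- counting facts
  have hcb : (((Finset.univ.filter fun p => f p = some bVal).card : ℕ) : ℝ) = θ * n := hbias.2
  have hsum : (Finset.univ.filter fun p => f p = some aVal).card
      + (Finset.univ.filter fun p => f p = some bVal).card = n := by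
    have h1 := Finset.card_filter_add_card_filter_not
      (s := (Finset.univ : Finset (Fin n))) (p := fun p => f p = some bVal)
    have h2 : (Finset.univ.filter fun p => ¬ f p = some bVal)
        = Finset.univ.filter fun p => f p = some aVal := by
      apply Finset.filter_congr
      intro p _
      rcases hbias.1 p with h' | h' <;> simp [h', aVal, bVal]
    rw [h2] at h1
    have h3 : (Finset.univ : Finset (Fin n)).card = n := Finset.card_fin n
    omega
  have hca : (((Finset.univ.filter fun p => f p = some aVal).card : ℕ) : ℝ) = (1 - θ) * n := by
    have := hsum
    have h4 : (((Finset.univ.filter fun p => f p = some aVal).card : ℕ) : ℝ)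
        + (((Finset.univ.filter fun p => f p = some bVal).card : ℕ) : ℝ) = (n : ℝ) := by
      exact_mod_cast congrArg (Nat.cast : ℕ → ℝ) this
    linarith [hcb]
  -- the extra hypothesis for round 1
  have hext1 : ∀ H : Multiset Val, H ≤ msetOf f → (ψ 1).thrVal * n < (H.card : ℝ) →
      (H.filterMap id).toFinset.card = 1 → A.thrU 1 * n < ((H.filterMap id).card : ℝ) := by
    intro H hsub hthr hcard
    have hdef : ∀ x ∈ H, x ≠ none := by
      intro x hx
      obtain ⟨q, hq⟩ := msetOf_mem (Multiset.mem_of_le hsub hx)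
      rcases hbias.1 q with h' | h' <;> simp [← hq, h']
    by_cases hcaseU : A.thrU 1 ≤ (ψ 1).thrVal
    · rw [filterMap_id_card hdef]
      calc A.thrU 1 * n ≤ (ψ 1).thrVal * n :=
            mul_le_mul_of_nonneg_right hcaseU (Nat.cast_nonneg n)
        _ < _ := hthr
    · exfalso
      have hb : A.borderThr ≤ (ψ 1).thrVal := by
        rcases huOr with h | h
        · exact absurd h hcaseU
        · exact h
      have hθ : 1 - A.borderThr ≤ θ ∧ θ ≤ A.borderThr := by
        rcases hcase with h | h
        · exact absurd (le_trans h hum) hcaseU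
        · exact h
      obtain ⟨v, hv⟩ := Finset.card_eq_one.mp hcard
      have hmem : ∀ x ∈ H, x = some v := by
        intro x hx
        obtain ⟨w, hw⟩ := Option.ne_none_iff_exists'.mp (hdef x hx)
        have hwm : w ∈ (H.filterMap id).toFinset :=
          Multiset.mem_toFinset.mpr (mem_filterMap_id.mpr (by rw [← hw]; exact hx))
        rw [hv] at hwm
        rw [hw, Finset.mem_singleton.mp hwm]
      have hcnt : H.count (some v) = H.card :=
        Multiset.count_eq_card.mpr (fun b hb => (hmem b hb).symm)
      have hle_count : H.card ≤ (msetOf f).count (some v) := by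
        rw [← hcnt]
        exact Multiset.count_le_of_le _ hsub
      have hHpos : 0 < H.card := by
        have : (0:ℝ) < (H.card : ℝ) :=
          lt_of_le_of_lt (mul_nonneg ht1 (Nat.cast_nonneg n)) hthr
        exact_mod_cast this
      obtain ⟨x, hx⟩ := Multiset.card_pos_iff_exists_mem.mp hHpos
      obtain ⟨q, hq⟩ := msetOf_mem (Multiset.mem_of_le hsub hx)
      have hxv : x = some v := hmem x hx
      have hbound : (H.card : ℝ) ≤ A.borderThr * n := by
        have hle_countR : (H.card : ℝ) ≤ (((msetOf f).count (some v) : ℕ) : ℝ) := by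
          exact_mod_cast hle_count
        rcases hbias.1 q with h' | h'
        · have hva : some v = some aVal := by rw [← hxv, ← hq, h']
          rw [msetOf_count, hva] at hle_countR
          rw [hca] at hle_countR
          have : (1 - θ : ℝ) ≤ A.borderThr := by linarith [hθ.1]
          calc (H.card : ℝ) ≤ (1 - θ) * n := hle_countR
            _ ≤ A.borderThr * n := mul_le_mul_of_nonneg_right this (Nat.cast_nonneg n)
        · have hvb : some v = some bVal := by rw [← hxv, ← hq, h']
          rw [msetOf_count, hvb] at hle_countR
          rw [hcb] at hle_countR
          calc (H.card : ℝ) ≤ θ * n := hle_countR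
            _ ≤ A.borderThr * n := mul_le_mul_of_nonneg_right hθ.2 (Nat.cast_nonneg n)
      have hbn : A.borderThr * n ≤ (ψ 1).thrVal * n :=
        mul_le_mul_of_nonneg_right hb (Nat.cast_nonneg n)
      linarith
  -- step A: round 1 gives binary values
  have hbin1 : ∀ p, g 1 p = some aVal ∨ g 1 p = some bVal := by
    have htr := hround 1 le_rfl hr1
    rw [show (1:ℕ) - 1 = 0 from rfl, hg0] at htr
    exact roundTrans_binary htr hbias.1 hU1 hM1 ht1 hum hext1
  -- step B: binary values up to the equalizer round
  have hbin : ∀ j, 1 ≤ j → j ≤ e → ∀ p, g j p = some aVal ∨ g j p = some bVal := by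
    intro j
    induction j with
    | zero => omega
    | succ k ih =>
      intro _ hje
      rcases Nat.eq_zero_or_pos k with hk0 | hk1
      · subst hk0; exact hbin1
      · have hnp := hnonpres (k+1) (by omega) hje
        rw [Algo.preserving] at hnp
        push_neg at hnp
        obtain ⟨hU', hM', hmax⟩ := hnp
        have hUk : (A.rounds (k+1)).uniThr.isSome = true := hU'
        have hMk : (A.rounds (k+1)).mults ≠ [] := hM'
        have h0U : 0 ≤ A.thrU (k+1) := thrU_nonneg_of_some hUk
        have hmaxle : max (A.thrU (k+1)) (A.thrM (k+1)) ≤ (ψ (k+1)).thrVal := hmax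
        have hUle : A.thrU (k+1) ≤ (ψ (k+1)).thrVal := le_trans (le_max_left _ _) hmaxle
        have ht0 : 0 ≤ (ψ (k+1)).thrVal := le_trans h0U hUle
        have hkr : k + 1 ≤ A.r := by omega
        have htr := hround (k+1) (by omega) hkr
        rw [Nat.add_sub_cancel] at htr
        have ihk := ih (by omega) (by omega)
        refine roundTrans_binary htr ihk hUk hMk ht0
          (le_trans (le_max_right _ _) hmaxle) ?_
        intro H hsub hthr _
        have hdef : ∀ x ∈ H, x ≠ none := by
          intro x hx
          obtain ⟨q, hq⟩ := msetOf_mem (Multiset.mem_of_le hsub hx)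
          rcases ihk q with h' | h' <;> simp [← hq, h']
        rw [filterMap_id_card hdef]
        calc A.thrU (k+1) * n ≤ (ψ (k+1)).thrVal * n :=
              mul_le_mul_of_nonneg_right hUle (Nat.cast_nonneg n)
          _ < _ := hthr
  -- step C: the equalizer round makes the state constant
  obtain ⟨v, hv01, hv0⟩ : ∃ v, (v = aVal ∨ v = bVal) ∧ g e ⟨0, hn⟩ = some v := by
    rcases hbin e he1 le_rfl ⟨0, hn⟩ with h' | h'
    · exact ⟨aVal, Or.inl rfl, h'⟩
    · exact ⟨bVal, Or.inr rfl, h'⟩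
  have hconst : ∀ p, g e p = some v := by
    obtain ⟨Hs, hsub, hsat, hupd⟩ := hround e he1 her
    have heqs := hsat.1 heq
    intro p
    rw [hupd p, heqs p ⟨0, hn⟩, ← hupd ⟨0, hn⟩, hv0]
  -- step D: solo-safe rounds preserve the constant state
  have hsolo : ∀ j, e ≤ j → j ≤ A.ir → ∀ p, g j p = some v := by
    intro j hej
    induction j, hej using Nat.le_induction with
    | base => intro _; exact hconst
    | succ k hk ih =>
      intro hkir
      have hssk := hss (k+1) (by omega) hkir
      have htr := hround (k+1) (by omega) (by omega)
      rw [Nat.add_sub_cancel] at htr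
      exact roundTrans_solo htr (ih (by omega)) hssk.1 hssk.2
  have hgir : ∀ p, g A.ir p = some v := hsolo A.ir heir le_rfl
  have hf'v : ∀ p, f' p = some v := by
    intro p
    rw [hf' p, hgir p]
    simp
  rcases hv01 with rfl | rfl
  · right; funext p; rw [hf'v p]; rfl
  · left; funext p; rw [hf'v p]; rfl

end HO
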